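/- The partial derivative with respect to μ of f(μ, ε) = Φ(μ/2 - ε/μ) - e^ε Φ(-μ/2 - ε/μ) equals φ(μ/2 - ε/μ), where φ is the standard normal density; in particular this derivative is always positive for μ > 0. -/

import Mathlib

noncomputable def stdNormalPDF (x : ℝ) : ℝ :=
  (Real.sqrt (2 * Real.pi))⁻¹ * Real.exp (-x ^ 2 / 2)

noncomputable def stdNormalCDF (x : ℝ) : ℝ := ∫ t in Set.Iic x, stdNormalPDF t

noncomputable def gaussF (μ ε : ℝ) : ℝ :=
  stdNormalCDF (μ / 2 - ε / μ) - Real.exp ε * stdNormalCDF (-μ / 2 - ε / μ)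

lemma pdf_pos (x : ℝ) : 0 < stdNormalPDF x := by
  unfold stdNormalPDF
  have h : 0 < Real.sqrt (2 * Real.pi) := Real.sqrt_pos.mpr (by positivity)
  positivity

lemma pdf_cont : Continuous stdNormalPDF := by
  unfold stdNormalPDF; continuity

lemma pdf_integrable : MeasureTheory.Integrable stdNormalPDF := by
  have h : MeasureTheory.Integrable (fun x : ℝ => Real.exp (-(1/2 : ℝ) * x ^ 2)) :=
    integrable_exp_neg_mul_sq (by norm_num)
  have := h.const_mul (Real.sqrt (2 * Real.pi))⁻¹
  refine this.congr ?_
  filter_upwards with x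
  unfold stdNormalPDF
  ring_nf

lemma cdf_hasDerivAt (x : ℝ) : HasDerivAt stdNormalCDF (stdNormalPDF x) x := by
  have heq : ∀ y : ℝ, stdNormalCDF y = stdNormalCDF 0 + ∫ t in (0:ℝ)..y, stdNormalPDF t := by
    intro y
    unfold stdNormalCDF
    rw [← intervalIntegral.integral_Iic_sub_Iic (pdf_integrable.integrableOn)
      (pdf_integrable.integrableOn)]
    ring
  have h : HasDerivAt (fun y => stdNormalCDF 0 + ∫ t in (0:ℝ)..y, stdNormalPDF t)
      (stdNormalPDF x) x :=
    ((pdf_cont.integral_hasStrictDerivAt 0 x).hasDerivAt).const_add _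
  exact h.congr_of_eventuallyEq (Filter.Eventually.of_forall fun y => heq y)

theorem gaussF_hasDerivAt_mu (μ ε : ℝ) (hμ : 0 < μ) :
    HasDerivAt (fun m => gaussF m ε) (stdNormalPDF (μ / 2 - ε / μ)) μ ∧
      0 < stdNormalPDF (μ / 2 - ε / μ) := by
  refine ⟨?_, pdf_pos _⟩
  have hμ' : μ ≠ 0 := ne_of_gt hμ
  -- inner function m ↦ m/2 - ε/m
  have hinner : HasDerivAt (fun m : ℝ => m / 2 - ε / m) (1/2 + ε / μ ^ 2) μ := by
    have h1 : HasDerivAt (fun m : ℝ => m / 2) (1/2) μ := by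
      simpa using (hasDerivAt_id μ).div_const 2
    have h2 : HasDerivAt (fun m : ℝ => ε / m) (-(ε / μ ^ 2)) μ := by
      have := (hasDerivAt_inv hμ').const_mul ε
      simpa [div_eq_mul_inv, mul_comm, neg_div] using this
    simpa [sub_neg_eq_add, Pi.sub_def] using h1.sub h2
  have hinner2 : HasDerivAt (fun m : ℝ => -m / 2 - ε / m) (-(1/2) + ε / μ ^ 2) μ := by
    have h1 : HasDerivAt (fun m : ℝ => -m / 2) (-(1/2)) μ := by
      simpa [neg_div, Pi.neg_def] using ((hasDerivAt_id μ).div_const 2).neg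
    have h2 : HasDerivAt (fun m : ℝ => ε / m) (-(ε / μ ^ 2)) μ := by
      have := (hasDerivAt_inv hμ').const_mul ε
      simpa [div_eq_mul_inv, mul_comm, neg_div] using this
    simpa [sub_neg_eq_add, Pi.sub_def] using h1.sub h2
  have hA := (cdf_hasDerivAt (μ / 2 - ε / μ)).comp μ hinner
  have hB := ((cdf_hasDerivAt (-μ / 2 - ε / μ)).comp μ hinner2).const_mul (Real.exp ε)
  have hder := hA.sub hB
  have key : stdNormalPDF (μ / 2 - ε / μ) * (1/2 + ε / μ ^ 2) -
      Real.exp ε * (stdNormalPDF (-μ / 2 - ε / μ) * (-(1/2) + ε / μ ^ 2)) =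
      stdNormalPDF (μ / 2 - ε / μ) := by
    have hb : Real.exp ε * stdNormalPDF (-μ / 2 - ε / μ) = stdNormalPDF (μ / 2 - ε / μ) := by
      unfold stdNormalPDF
      rw [mul_comm (Real.exp ε), mul_assoc, ← Real.exp_add]
      congr 2
      field_simp
      ring
    calc stdNormalPDF (μ / 2 - ε / μ) * (1/2 + ε / μ ^ 2) -
        Real.exp ε * (stdNormalPDF (-μ / 2 - ε / μ) * (-(1/2) + ε / μ ^ 2))
        = stdNormalPDF (μ / 2 - ε / μ) * (1/2 + ε / μ ^ 2) -
          (Real.exp ε * stdNormalPDF (-μ / 2 - ε / μ)) * (-(1/2) + ε / μ ^ 2) := by ring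
      _ = stdNormalPDF (μ / 2 - ε / μ) := by rw [hb]; ring
  have : HasDerivAt (fun m => gaussF m ε) (stdNormalPDF (μ / 2 - ε / μ) * (1/2 + ε / μ ^ 2) -
      Real.exp ε * (stdNormalPDF (-μ / 2 - ε / μ) * (-(1/2) + ε / μ ^ 2))) μ := by
    unfold gaussF
    exact hder
  rwa [key] at this
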